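/- Let p be a prime and a_1 ≥ a_2 ≥ ... ≥ a_N be positive integers. Define the Garnir content Gc(a_1,...,a_N) as the greatest common divisor of the set {C(a_i, k) : 1 ≤ i ≤ N-1, 1 ≤ k ≤ a_{i+1} - 1} (with gcd of the empty set equal to 0). Then p divides Gc(a_1,...,a_N) if and only if ν_p(a_i) ≥ ℓ_p(a_{i+1} - 1) for all 1 ≤ i ≤ N-1, where ℓ_p(0) is interpreted so that the condition holds vacuously when a_{i+1} = 1. -/

import Mathlib

open Nat

private lemma not_dvd_choose_pow_val (p : ℕ) (hp : p.Prime) :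
    ∀ ν n : ℕ, n ≠ 0 → padicValNat p n = ν → ¬ p ∣ n.choose (p ^ ν) := by
  haveI : Fact p.Prime := ⟨hp⟩
  intro ν
  induction ν with
  | zero =>
    intro n hn hv hdvd
    rw [pow_zero, Nat.choose_one_right] at hdvd
    have := one_le_padicValNat_of_dvd hn hdvd
    omega
  | succ ν ih =>
    intro n hn hv hdvd
    have hpd : p ∣ n := dvd_of_one_le_padicValNat (by omega)
    obtain ⟨n', rfl⟩ := hpd
    have hn' : n' ≠ 0 := by rintro rfl; simp at hn
    have hv' : padicValNat p n' = ν := by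
      have := padicValNat.mul (p := p) hp.ne_zero hn'
      rw [padicValNat.self hp.one_lt] at this
      omega
    have hlucas := Choose.choose_modEq_choose_mod_mul_choose_div_nat
      (p := p) (n := p * n') (k := p ^ (ν + 1))
    have h1 : (p * n') % p = 0 := Nat.mul_mod_right p n'
    have h2 : (p ^ (ν + 1)) % p = 0 := by
      simp [Nat.pow_succ, Nat.mul_mod_left]
    have h3 : (p * n') / p = n' := Nat.mul_div_cancel_left n' hp.pos
    have h4 : (p ^ (ν + 1)) / p = p ^ ν := by
      rw [pow_succ, Nat.mul_div_cancel _ hp.pos]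
    rw [h1, h2, h3, h4, Nat.choose_zero_right, one_mul] at hlucas
    refine ih n' hn' hv' ?_
    have := (Nat.modEq_zero_iff_dvd).2 hdvd
    exact (Nat.modEq_zero_iff_dvd).1 (hlucas.symm.trans this)

private lemma dvd_choose_of_pow_dvd {p n k ℓ : ℕ} (hp : p.Prime) (hdvd : p ^ ℓ ∣ n)
    (hk1 : 1 ≤ k) (hkl : k < p ^ ℓ) (hkn : k ≤ n) : p ∣ n.choose k := by
  haveI : Fact p.Prime := ⟨hp⟩
  have hn0 : n ≠ 0 := by omega
  have hℓ : 1 ≤ ℓ := by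
    by_contra h
    interval_cases ℓ
    simp at hkl; omega
  have hνn : ℓ ≤ padicValNat p n := (padicValNat_dvd_iff_le hn0).1 hdvd
  have hνk : padicValNat p k < ℓ := by
    have h := Nat.le_of_dvd (by omega) (pow_padicValNat_dvd (p := p) (n := k))
    by_contra h'
    exact absurd (lt_of_le_of_lt h hkl) (not_lt.2 (Nat.pow_le_pow_right hp.pos (by omega)))
  have hc0 : 0 < n.choose k := Nat.choose_pos hkn
  have hmul := hp.emultiplicity_le_emultiplicity_choose_add n k
  rw [← padicValNat_eq_emultiplicity (p := p) hn0,
    ← padicValNat_eq_emultiplicity (p := p) hc0.ne',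
    ← padicValNat_eq_emultiplicity (p := p) (by omega : k ≠ 0), ← Nat.cast_add,
    Nat.cast_le] at hmul
  have h1 : 1 ≤ padicValNat p (n.choose k) := by omega
  exact dvd_of_one_le_padicValNat h1

private lemma key_iff (p : ℕ) (hp : p.Prime) (n m : ℕ) (hmn : m < n) :
    (∀ k, 1 ≤ k → k ≤ m → p ∣ n.choose k) ↔ sInf {j : ℕ | m < p ^ j} ≤ padicValNat p n := by
  have hn0 : n ≠ 0 := by omega
  have hne : {j : ℕ | m < p ^ j}.Nonempty := ⟨m, Nat.lt_pow_self hp.one_lt⟩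
  set ℓ := sInf {j : ℕ | m < p ^ j} with hℓ
  have hmem : m < p ^ ℓ := Nat.sInf_mem hne
  constructor
  · intro h
    by_contra hcon
    push_neg at hcon
    set ν := padicValNat p n with hν
    have hnot : ¬ m < p ^ ν := by
      intro hc
      have : ℓ ≤ ν := Nat.sInf_le hc
      omega
    push_neg at hnot
    have h1 : 1 ≤ p ^ ν := Nat.one_le_pow _ _ hp.pos
    exact not_dvd_choose_pow_val p hp ν n hn0 rfl (h _ h1 hnot)
  · intro h k hk1 hkm
    have hdvd : p ^ ℓ ∣ n :=
      dvd_trans (pow_dvd_pow p h) pow_padicValNat_dvd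
    exact dvd_choose_of_pow_dvd hp hdvd hk1 (by omega) (by omega)

/-- The Garnir content of a sequence `a 0, a 1, ..., a (N-1)` (representing
`a_1 ≥ a_2 ≥ ... ≥ a_N`): the gcd of the binomial coefficients
`C(a_i, k)` for `1 ≤ i ≤ N-1` and `1 ≤ k ≤ a_{i+1} - 1`, with `gcd ∅ = 0`. -/
def garnirContent (N : ℕ) (a : ℕ → ℕ) : ℕ :=
  (Finset.range (N - 1)).gcd fun i =>
    (Finset.Icc 1 (a (i + 1) - 1)).gcd fun k => (a i).choose k

/-- `p` divides the Garnir content iff `ν_p(a_i) ≥ ℓ_p(a_{i+1} - 1)` for all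
`1 ≤ i ≤ N - 1`.  (When `a_{i+1} = 1`, the infimum `ℓ_p(0) = sInf {j | 0 < p^j} = 0`,
so the condition holds vacuously.) -/
theorem prime_dvd_garnirContent_iff (p N : ℕ) (hp : p.Prime) (hN : 1 ≤ N)
    (a : ℕ → ℕ) (hpos : ∀ i, i < N → 0 < a i)
    (hdec : ∀ i j, i ≤ j → j < N → a j ≤ a i) :
    p ∣ garnirContent N a ↔
      ∀ i, i + 1 < N →
        sInf {j : ℕ | a (i + 1) - 1 < p ^ j} ≤ padicValNat p (a i) := by
  unfold garnirContent
  rw [Finset.dvd_gcd_iff]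
  simp only [Finset.mem_range, Finset.dvd_gcd_iff, Finset.mem_Icc]
  constructor
  · intro h i hi
    have hmn : a (i + 1) - 1 < a i := by
      have h1 := hpos (i + 1) hi
      have h2 := hdec i (i + 1) (by omega) hi
      omega
    exact (key_iff p hp (a i) (a (i + 1) - 1) hmn).1
      (fun k hk1 hkm => h i (by omega) k ⟨hk1, hkm⟩) 
  · intro h i hi k hk
    have hi' : i + 1 < N := by omega
    have hmn : a (i + 1) - 1 < a i := by
      have h1 := hpos (i + 1) hi'
      have h2 := hdec i (i + 1) (by omega) hi'
      omega
    exact (key_iff p hp (a i) (a (i + 1) - 1) hmn).2 (h i hi') k hk.1 hk.2
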